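/- Set h = sn(3u,k), x = dn(u,k) for k ∈ (0,1), u ∈ ℝ with sn(u,k) ≥ 0, cn(u,k) ≥ 0 and appropriate nonvanishing denominators. Then Y = k is a root of e + h·d·Y + c·Y² + h·b·Y³ + a·Y⁴ + h·Y⁵ = 0, where e = √(1−x²)(1−4x²+6x⁴−4x⁶+x⁸), d = 1−6x⁴+8x⁶−3x⁸, c = √(1−x²)(−2+8x²−6x⁴), b = −2+6x⁴−4x⁶, a = (1−4x²)√(1−x²). -/

import Mathlib

/-- Main Theorem: with `x = dn(u,k)` and `h = sn(3u,k)` (given via the Jacobi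
addition formulas), `Y = k` is a root of the two–parameter quintic. -/
theorem main_theorem (k u s c x s2 c2 d2 h : ℝ) (hk0 : 0 < k) (hk1 : k < 1)
    (h1 : s ^ 2 + c ^ 2 = 1) (h2 : k ^ 2 * s ^ 2 + x ^ 2 = 1)
    (hs : 0 ≤ s) (hc : 0 ≤ c)
    (hD2 : 1 - k ^ 2 * s ^ 4 ≠ 0)
    (hs2 : s2 = 2 * s * c * x / (1 - k ^ 2 * s ^ 4))
    (hc2 : c2 = (c ^ 2 - s ^ 2 * x ^ 2) / (1 - k ^ 2 * s ^ 4))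
    (hd2 : d2 = (x ^ 2 - k ^ 2 * s ^ 2 * c ^ 2) / (1 - k ^ 2 * s ^ 4))
    (hD3 : 1 - k ^ 2 * s ^ 2 * s2 ^ 2 ≠ 0)
    (hh : h = (s * c2 * d2 + s2 * c * x) / (1 - k ^ 2 * s ^ 2 * s2 ^ 2)) :
    Real.sqrt (1 - x ^ 2) * (1 - 4 * x ^ 2 + 6 * x ^ 4 - 4 * x ^ 6 + x ^ 8)
      + h * (1 - 6 * x ^ 4 + 8 * x ^ 6 - 3 * x ^ 8) * k
      + Real.sqrt (1 - x ^ 2) * (-2 + 8 * x ^ 2 - 6 * x ^ 4) * k ^ 2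
      + h * (-2 + 6 * x ^ 4 - 4 * x ^ 6) * k ^ 3
      + (1 - 4 * x ^ 2) * Real.sqrt (1 - x ^ 2) * k ^ 4
      + h * k ^ 5 = 0 := by
  have hx : Real.sqrt (1 - x ^ 2) = k * s := by
    rw [show (1 : ℝ) - x ^ 2 = (k * s) ^ 2 by nlinarith]
    exact Real.sqrt_sq (by positivity)
  have hD3' : 1 - k ^ 2 * s ^ 2 * s2 ^ 2
      = ((1 - k ^ 2 * s ^ 4) ^ 2 - 4 * k ^ 2 * s ^ 4 * c ^ 2 * x ^ 2)
        / (1 - k ^ 2 * s ^ 4) ^ 2 := by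
    rw [hs2]; field_simp; ring
  have hNden : (1 - k ^ 2 * s ^ 4) ^ 2 - 4 * k ^ 2 * s ^ 4 * c ^ 2 * x ^ 2 ≠ 0 := by
    intro hz
    apply hD3
    rw [hD3', hz, zero_div]
  have h0 : h * (1 - k ^ 2 * s ^ 2 * s2 ^ 2) = s * c2 * d2 + s2 * c * x := by
    rw [hh]; exact div_mul_cancel₀ _ hD3
  have hfact : (1 - k ^ 2 * s ^ 4) ^ 2 - 4 * k ^ 2 * s ^ 4 * c ^ 2 * x ^ 2
      = (1 - k ^ 2 * s ^ 2 * s2 ^ 2) * (1 - k ^ 2 * s ^ 4) ^ 2 := by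
    rw [hD3']; field_simp
  have hval : h = (s * (c ^ 2 - s ^ 2 * x ^ 2) * (x ^ 2 - k ^ 2 * s ^ 2 * c ^ 2)
      + 2 * s * c ^ 2 * x ^ 2 * (1 - k ^ 2 * s ^ 4))
      / ((1 - k ^ 2 * s ^ 4) ^ 2 - 4 * k ^ 2 * s ^ 4 * c ^ 2 * x ^ 2) := by
    rw [eq_div_iff hNden, hfact, ← mul_assoc, h0, hs2, hc2, hd2]
    simp only [div_eq_mul_inv]
    have hinv : (1 - k ^ 2 * s ^ 4) * (1 - k ^ 2 * s ^ 4)⁻¹ = 1 := mul_inv_cancel₀ hD2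
    linear_combination (s * (c ^ 2 - s ^ 2 * x ^ 2) * (x ^ 2 - k ^ 2 * s ^ 2 * c ^ 2) * ((1 - k ^ 2 * s ^ 4) * (1 - k ^ 2 * s ^ 4)⁻¹ + 1) + 2 * s * c ^ 2 * x ^ 2 * (1 - k ^ 2 * s ^ 4)) * hinv
  rw [hx]
  have hN : h * ((1 - k ^ 2 * s ^ 4) ^ 2 - 4 * k ^ 2 * s ^ 4 * c ^ 2 * x ^ 2) = (s * (c ^ 2 - s ^ 2 * x ^ 2) * (x ^ 2 - k ^ 2 * s ^ 2 * c ^ 2) + 2 * s * c ^ 2 * x ^ 2 * (1 - k ^ 2 * s ^ 4)) := by rw [hval]; exact div_mul_cancel₀ _ hNden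
  have hG : ((1 - k ^ 2 * s ^ 4) ^ 2 - 4 * k ^ 2 * s ^ 4 * c ^ 2 * x ^ 2) * (k * s * (1 - 4 * x ^ 2 + 6 * x ^ 4 - 4 * x ^ 6 + x ^ 8)
      + h * (1 - 6 * x ^ 4 + 8 * x ^ 6 - 3 * x ^ 8) * k
      + k * s * (-2 + 8 * x ^ 2 - 6 * x ^ 4) * k ^ 2
      + h * (-2 + 6 * x ^ 4 - 4 * x ^ 6) * k ^ 3
      + (1 - 4 * x ^ 2) * (k * s) * k ^ 4
      + h * k ^ 5) = 0 := by
    linear_combination (((3) * k * s * x ^ 2 + (-18) * k * s * x ^ 6 + (24) * k * s * x ^ 8 + (-9) * k * s * x ^ 10 + (-6) * k ^ 3 * s * x ^ 2 + (18) * k ^ 3 * s * x ^ 6 + (-12) * k ^ 3 * s * x ^ 8 + (-1) * k ^ 3 * s ^ 3 + (6) * k ^ 3 * s ^ 3 * x ^ 4 + (-8) * k ^ 3 * s ^ 3 * x ^ 6 + (3) * k ^ 3 * s ^ 3 * x ^ 8 + (-1) * k ^ 3 * s ^ 3 * c ^ 2 + (6) * k ^ 3 * s ^ 3 * c ^ 2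 * x ^ 4 + (-8) * k ^ 3 * s ^ 3 * c ^ 2 * x ^ 6 + (3) * k ^ 3 * s ^ 3 * c ^ 2 * x ^ 8 + (1) * k ^ 3 * s ^ 5 + (-5) * k ^ 3 * s ^ 5 * x ^ 2 + (10) * k ^ 3 * s ^ 5 * x ^ 4 + (-10) * k ^ 3 * s ^ 5 * x ^ 6 + (5) * k ^ 3 * s ^ 5 * x ^ 8 + (-1) * k ^ 3 * s ^ 5 * x ^ 10 + (3) * k ^ 5 * s * x ^ 2 + (2) * k ^ 5 * s ^ 3 + (-6) * k ^ 5 * s ^ 3 * x ^ 4 + (4) * k ^ 5 * s ^ 3 * x ^ 6 + (2) * k ^ 5 * s ^ 3 * c ^ 2 + (-6) * k ^ 5 * s ^ 3 * c ^ 2 * x ^ 4 + (4) * k ^ 5 * s ^ 3 * c ^ 2 * x ^ 6 + (-2) * k ^ 5 * s ^ 5 + (10) * k ^ 5 * s ^ 5 * x ^ 2 + (-26) * k ^ 5 * s ^ 5 * x ^ 4 + (14) * k ^ 5 * s ^ 5 * x ^ 6 + (4) * k ^ 5 * s ^ 5 * x ^ 8 + (-1) * k ^ 7 * s ^ 3 +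 (-1) * k ^ 7 * s ^ 3 * c ^ 2 + (1) * k ^ 7 * s ^ 5 + (-5) * k ^ 7 * s ^ 5 * x ^ 2 + (16) * k ^ 7 * s ^ 5 * x ^ 4) * h1 + ((-1) * k * s + (-6) * k * s * x ^ 4 + (16) * k * s * x ^ 6 + (-9) * k * s * x ^ 8 + (3) * k * s ^ 3 * x ^ 2 + (4) * k * s ^ 3 * x ^ 4 + (-14) * k * s ^ 3 * x ^ 6 + (4) * k * s ^ 3 * x ^ 8 + (3) * k * s ^ 3 * x ^ 10 + (2) * k ^ 3 * s + (6) * k ^ 3 * s * x ^ 4 + (-12) * k ^ 3 * s * x ^ 6 + (-6) * k ^ 3 * s ^ 3 * x ^ 2 + (-20) * k ^ 3 * s ^ 3 * x ^ 4 + (22) * k ^ 3 * s ^ 3 * x ^ 6 + (4) * k ^ 3 * s ^ 3 * x ^ 8 + (12) * k ^ 3 * s ^ 5 * x ^ 4 + (-8) * k ^ 3 * s ^ 5 * x ^ 6 + (-4) * k ^ 3 * s ^ 5 * x ^ 8 + (1) * k ^ 3 * s ^ 7 + (-4) * k ^ 3 * s ^ 7 * x ^ 2 + (6) * k ^ 3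 * s ^ 7 * x ^ 4 + (-4) * k ^ 3 * s ^ 7 * x ^ 6 + (1) * k ^ 3 * s ^ 7 * x ^ 8 + (-1) * k ^ 5 * s + (3) * k ^ 5 * s ^ 3 * x ^ 2 + (16) * k ^ 5 * s ^ 3 * x ^ 4 + (-12) * k ^ 5 * s ^ 5 * x ^ 4 + (-2) * k ^ 5 * s ^ 7 + (8) * k ^ 5 * s ^ 7 * x ^ 2 + (-6) * k ^ 5 * s ^ 7 * x ^ 4 + (1) * k ^ 7 * s ^ 7 + (-4) * k ^ 7 * s ^ 7 * x ^ 2) * h2) + ((1 - 6 * x ^ 4 + 8 * x ^ 6 - 3 * x ^ 8) * k + (-2 + 6 * x ^ 4 - 4 * x ^ 6) * k ^ 3 + k ^ 5) * hN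
  exact (mul_eq_zero.mp hG).resolve_left hNden
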